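/- Let (X, μ) be a σ-finite measure space, let (p_k)_{k∈ℕ} be real numbers with p_k > 1 for every k and ∑_{k∈ℕ} 1/p_k = 1, and let f_k ∈ L^{p_k}(X, μ) for each k. Suppose the partial products ∏_{k=0}^{n} ‖f_k‖_{L^{p_k}} converge, as n → ∞, to a limit in (0, +∞], and that the pointwise partial products ∏_{k=0}^{n} f_k converge μ-almost everywhere to a function f. Then ‖f‖_{L¹} ≤ ∏_{k=0}^{∞} ‖f_k‖_{L^{p_k}}; in particular, if the right-hand side is finite then f ∈ L¹(X, μ). -/

import Mathlib

open MeasureTheory Real Filter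
open scoped ENNReal

theorem stmt8 {X : Type*} [MeasurableSpace X] (μ : Measure X) [SigmaFinite μ]
    (p : ℕ → ℝ) (hp : ∀ k, 1 < p k) (hsum : ∑' k : ℕ, 1 / p k = 1)
    (f : ℕ → X → ℝ) (hf : ∀ k, MemLp (f k) (ENNReal.ofReal (p k)) μ)
    (L : ℝ≥0∞) (hL : 0 < L)
    (hprod : Tendsto
      (fun n => ∏ k ∈ Finset.range (n + 1), eLpNorm (f k) (ENNReal.ofReal (p k)) μ)
      atTop (nhds L))
    (F : X → ℝ)
    (hptw : ∀ᵐ x ∂μ, Tendsto (fun n => ∏ k ∈ Finset.range (n + 1), f k x)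
      atTop (nhds (F x))) :
    eLpNorm F 1 μ ≤ L ∧ (L < ⊤ → Integrable F μ) := by
  have hp0 : ∀ k, 0 < p k := fun k => lt_trans one_pos (hp k)
  -- summability
  have hsummable : Summable (fun k => 1 / p k) := by
    by_contra h
    rw [tsum_eq_zero_of_not_summable h] at hsum
    norm_num at hsum
  -- partial sums
  set S : ℕ → ℝ := fun n => ∑ k ∈ Finset.range (n + 1), 1 / p k with hS
  have hSpos : ∀ n, 0 < S n := by
    intro n
    apply Finset.sum_pos (fun k _ => one_div_pos.2 (hp0 k))
    exact ⟨0, Finset.mem_range.2 (Nat.succ_pos n)⟩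
  have hStendsto : Tendsto S atTop (nhds 1) := by
    have h1 : Tendsto (fun n => ∑ k ∈ Finset.range n, 1 / p k) atTop (nhds 1) := by
      have := hsummable.hasSum.tendsto_sum_nat
      rwa [hsum] at this
    exact h1.comp (tendsto_add_atTop_nat 1)
  set q : ℕ → ℝ := fun n => (S n)⁻¹ with hq
  have hqpos : ∀ n, 0 < q n := fun n => inv_pos.2 (hSpos n)
  have hqtendsto : Tendsto q atTop (nhds 1) := by
    have := hStendsto.inv₀ one_ne_zero
    simpa using this
  -- measurability of each f k
  have hfm : ∀ k, AEMeasurable (fun x => (‖f k x‖₊ : ℝ≥0∞)) μ :=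
    fun k => (hf k).aestronglyMeasurable.enorm
  -- the key Hölder bound for partial products
  have key : ∀ n, (∫⁻ x, (‖∏ k ∈ Finset.range (n + 1), f k x‖₊ : ℝ≥0∞) ^ q n ∂μ)
      ≤ (∏ k ∈ Finset.range (n + 1), eLpNorm (f k) (ENNReal.ofReal (p k)) μ) ^ q n := by
    intro n
    have hexp : ∑ k ∈ Finset.range (n + 1), (1 / p k) / S n = 1 := by
      rw [← Finset.sum_div, div_self (hSpos n).ne']
    have hexpnn : ∀ k ∈ Finset.range (n + 1), 0 ≤ (1 / p k) / S n :=
      fun k _ => div_nonneg (one_div_pos.2 (hp0 k)).le (hSpos n).le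
    have hmeas : ∀ k ∈ Finset.range (n + 1),
        AEMeasurable (fun x => (‖f k x‖₊ : ℝ≥0∞) ^ p k) μ :=
      fun k _ => (hfm k).pow_const _
    have holder := ENNReal.lintegral_prod_norm_pow_le (Finset.range (n + 1)) hmeas hexp hexpnn
    calc (∫⁻ x, (‖∏ k ∈ Finset.range (n + 1), f k x‖₊ : ℝ≥0∞) ^ q n ∂μ)
        = ∫⁻ x, ∏ k ∈ Finset.range (n + 1),
            ((fun x => (‖f k x‖₊ : ℝ≥0∞) ^ p k) x) ^ ((1 / p k) / S n) ∂μ := by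
          congr 1
          funext x
          rw [nnnorm_prod]
          push_cast
          rw [← ENNReal.prod_rpow_of_nonneg (hqpos n).le]
          apply Finset.prod_congr rfl
          intro k _
          rw [← ENNReal.rpow_mul]
          congr 1
          simp only [hq, div_div, mul_one_div]
          rw [div_mul_cancel_left₀ (hp0 k).ne']
      _ ≤ ∏ k ∈ Finset.range (n + 1),
            (∫⁻ x, (‖f k x‖₊ : ℝ≥0∞) ^ p k ∂μ) ^ ((1 / p k) / S n) := holder
      _ = (∏ k ∈ Finset.range (n + 1), eLpNorm (f k) (ENNReal.ofReal (p k)) μ) ^ q n := by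
          rw [← ENNReal.prod_rpow_of_nonneg (hqpos n).le]
          apply Finset.prod_congr rfl
          intro k _
          rw [eLpNorm_eq_lintegral_rpow_enorm_toReal (by simp [hp0 k]) ENNReal.ofReal_ne_top,
            ENNReal.toReal_ofReal (hp0 k).le, ← ENNReal.rpow_mul]
          congr 1
  -- a.e. pointwise convergence of |P_n|^{q n} to |F|
  have hptw2 : ∀ᵐ x ∂μ, Tendsto
      (fun n => (‖∏ k ∈ Finset.range (n + 1), f k x‖₊ : ℝ≥0∞) ^ q n)
      atTop (nhds (‖F x‖₊ : ℝ≥0∞)) := by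
    filter_upwards [hptw] with x hx
    have habs : Tendsto (fun n => |∏ k ∈ Finset.range (n + 1), f k x|) atTop
        (nhds |F x|) := hx.abs
    have hrpow : Tendsto (fun n => |∏ k ∈ Finset.range (n + 1), f k x| ^ q n) atTop
        (nhds (|F x| ^ (1 : ℝ))) := habs.rpow hqtendsto (Or.inr one_pos)
    rw [Real.rpow_one] at hrpow
    have h1 : Tendsto (fun n => ENNReal.ofReal (|∏ k ∈ Finset.range (n + 1), f k x| ^ q n))
        atTop (nhds (ENNReal.ofReal |F x|)) :=
      (ENNReal.continuous_ofReal.tendsto _).comp hrpow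
    have heq : (fun n => ENNReal.ofReal (|∏ k ∈ Finset.range (n + 1), f k x| ^ q n))
        = fun n => (‖∏ k ∈ Finset.range (n + 1), f k x‖₊ : ℝ≥0∞) ^ q n := by
      funext n
      rw [← ENNReal.ofReal_rpow_of_nonneg (abs_nonneg _) (hqpos n).le,
        ← Real.norm_eq_abs, ofReal_norm, enorm_eq_nnnorm]
    rw [heq, ← Real.norm_eq_abs, ofReal_norm] at h1
    exact h1
  -- main estimate via Fatou
  have hmain : eLpNorm F 1 μ ≤ L := by
    rcases eq_top_or_lt_top L with hLtop | hLlt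
    · rw [hLtop]; exact le_top
    -- tendsto of the RHS
    have hPn_lt_top : ∀ n, (∏ k ∈ Finset.range (n + 1),
        eLpNorm (f k) (ENNReal.ofReal (p k)) μ) ≠ ⊤ := by
      intro n
      exact (ENNReal.prod_lt_top (fun k _ => (hf k).eLpNorm_lt_top)).ne
    have hRHStendsto : Tendsto (fun n => (∏ k ∈ Finset.range (n + 1),
        eLpNorm (f k) (ENNReal.ofReal (p k)) μ) ^ q n) atTop (nhds L) := by
      have htoReal : Tendsto (fun n => (∏ k ∈ Finset.range (n + 1),
          eLpNorm (f k) (ENNReal.ofReal (p k)) μ).toReal) atTop (nhds L.toReal) :=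
        (ENNReal.tendsto_toReal hLlt.ne).comp hprod
      have hLpos : 0 < L.toReal := ENNReal.toReal_pos hL.ne' hLlt.ne
      have hrpow : Tendsto (fun n => (∏ k ∈ Finset.range (n + 1),
          eLpNorm (f k) (ENNReal.ofReal (p k)) μ).toReal ^ q n) atTop
          (nhds (L.toReal ^ (1 : ℝ))) := htoReal.rpow hqtendsto (Or.inr one_pos)
      rw [Real.rpow_one] at hrpow
      have h1 : Tendsto (fun n => ENNReal.ofReal ((∏ k ∈ Finset.range (n + 1),
          eLpNorm (f k) (ENNReal.ofReal (p k)) μ).toReal ^ q n)) atTop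
          (nhds (ENNReal.ofReal L.toReal)) :=
        (ENNReal.continuous_ofReal.tendsto _).comp hrpow
      rw [ENNReal.ofReal_toReal hLlt.ne] at h1
      convert h1 using 2 with n
      rw [← ENNReal.ofReal_rpow_of_nonneg ENNReal.toReal_nonneg (hqpos n).le,
        ENNReal.ofReal_toReal (hPn_lt_top n)]
    -- Fatou
    have hmeas2 : ∀ n, AEMeasurable
        (fun x => (‖∏ k ∈ Finset.range (n + 1), f k x‖₊ : ℝ≥0∞) ^ q n) μ := by
      intro n
      apply AEMeasurable.pow_const
      have : AEMeasurable (fun x => ∏ k ∈ Finset.range (n + 1), f k x) μ :=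
        Finset.aemeasurable_fun_prod _ (fun k _ => (hf k).aestronglyMeasurable.aemeasurable)
      exact this.enorm
    have hFatou := lintegral_liminf_le' hmeas2 (μ := μ) (u := atTop)
    have heqF : (∫⁻ x, (‖F x‖₊ : ℝ≥0∞) ∂μ) = ∫⁻ x, liminf
        (fun n => (‖∏ k ∈ Finset.range (n + 1), f k x‖₊ : ℝ≥0∞) ^ q n) atTop ∂μ := by
      apply lintegral_congr_ae
      filter_upwards [hptw2] with x hx
      rw [hx.liminf_eq]
    rw [eLpNorm_one_eq_lintegral_enorm,
      show (∫⁻ x, ‖F x‖ₑ ∂μ) = ∫⁻ x, (‖F x‖₊ : ℝ≥0∞) ∂μ from rfl, heqF]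
    refine le_trans hFatou ?_
    refine le_trans (liminf_le_liminf (Eventually.of_forall key)) ?_
    rw [hRHStendsto.liminf_eq]
  refine ⟨hmain, fun hLlt => ?_⟩
  have hFmeas : AEStronglyMeasurable F μ := by
    apply aestronglyMeasurable_of_tendsto_ae atTop
      (f := fun n x => ∏ k ∈ Finset.range (n + 1), f k x)
    · intro n
      exact Finset.aestronglyMeasurable_fun_prod _ (fun k _ => (hf k).aestronglyMeasurable)
    · exact hptw
  rw [← memLp_one_iff_integrable]
  exact ⟨hFmeas, lt_of_le_of_lt hmain hLlt⟩
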